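/- arXiv:1011.6651 — 2 statements merged into one kernel-verified Lean document; each statement's English description precedes it below -/
import Mathlib

section
/- Let γ₁, γ₂ : [0,1] → ℝ³ be continuously differentiable curves with disjoint images, and let (γ₁ⁿ)ₙ and (γ₂ⁿ)ₙ be sequences of C¹ curves [0,1] → ℝ³ such that γᵢⁿ → γᵢ and (γᵢⁿ)' → γᵢ' uniformly on [0,1] as n → ∞ (i = 1,2), with the images of γ₁ⁿ and γ₂ⁿ disjoint for each n. Then L(γ₁ⁿ, γ₂ⁿ) → L(γ₁, γ₂). In particular, the Gauss linking number of open chains is a continuous function of the chain coordinates, and as the endpoints of open chains tend to coincide, their Gauss linking number tends to the Gauss linking number of the resulting closed chains. -/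
open MeasureTheory Set Filter

/-- Scalar triple product `det(a, b, c)` of three vectors in ℝ³. -/
noncomputable def tripleProduct (a b c : EuclideanSpace ℝ (Fin 3)) : ℝ :=
  Matrix.det (Matrix.of ![(a : Fin 3 → ℝ), (b : Fin 3 → ℝ), (c : Fin 3 → ℝ)])

/-- The Gauss linking number of two C¹ curves `γ₁ γ₂ : [0,1] → ℝ³`:
`L(γ₁,γ₂) = (1/4π) ∫₀¹∫₀¹ det(γ₁'(t), γ₂'(s), γ₁(t) − γ₂(s)) / ‖γ₁(t) − γ₂(s)‖³ dt ds`. -/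
noncomputable def gaussLinkingNumber (γ₁ γ₂ : ℝ → EuclideanSpace ℝ (Fin 3)) : ℝ :=
  (1 / (4 * Real.pi)) *
    ∫ p in (Icc (0:ℝ) 1) ×ˢ (Icc (0:ℝ) 1),
      tripleProduct (deriv γ₁ p.1) (deriv γ₂ p.2) (γ₁ p.1 - γ₂ p.2) /
        ‖γ₁ p.1 - γ₂ p.2‖ ^ 3

lemma coord_le_norm (a : EuclideanSpace ℝ (Fin 3)) (i : Fin 3) : |a i| ≤ ‖a‖ := by
  rw [EuclideanSpace.norm_eq a, show |a i| = Real.sqrt (‖a i‖^2) by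
    rw [Real.sqrt_sq_eq_abs]; simp]
  exact Real.sqrt_le_sqrt <|
    Finset.single_le_sum (f := fun j => ‖a j‖^2) (fun j _ => by positivity) (Finset.mem_univ i)

lemma tp_eq (a b c : EuclideanSpace ℝ (Fin 3)) : tripleProduct a b c =
    a 0 * b 1 * c 2 - a 0 * b 2 * c 1 - a 1 * b 0 * c 2 + a 1 * b 2 * c 0 + a 2 * b 0 * c 1
      - a 2 * b 1 * c 0 := by
  simp [tripleProduct, Matrix.det_fin_three]

lemma abs_tp_le (a b c : EuclideanSpace ℝ (Fin 3)) :
    |tripleProduct a b c| ≤ 6 * (‖a‖ * ‖b‖ * ‖c‖) := by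
  have key : ∀ i j k : Fin 3, |a i * b j * c k| ≤ ‖a‖ * ‖b‖ * ‖c‖ := by
    intro i j k
    rw [abs_mul, abs_mul]
    have h1 := coord_le_norm a i; have h2 := coord_le_norm b j; have h3 := coord_le_norm c k
    gcongr <;> positivity
  rw [tp_eq]
  have h1 := abs_le.1 (key 0 1 2); have h2 := abs_le.1 (key 0 2 1)
  have h3 := abs_le.1 (key 1 0 2); have h4 := abs_le.1 (key 1 2 0)
  have h5 := abs_le.1 (key 2 0 1); have h6 := abs_le.1 (key 2 1 0)
  apply abs_le.2; constructor <;> linarith [h1.1, h1.2, h2.1, h2.2, h3.1, h3.2, h4.1, h4.2,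
    h5.1, h5.2, h6.1, h6.2]

lemma tendsto_coord {α : Type*} {l : Filter α} {a : α → EuclideanSpace ℝ (Fin 3)}
    {A : EuclideanSpace ℝ (Fin 3)} (ha : Tendsto a l (nhds A)) (i : Fin 3) :
    Tendsto (fun x => a x i) l (nhds (A i)) := by
  rw [tendsto_iff_dist_tendsto_zero] at ha ⊢
  apply squeeze_zero (fun x => dist_nonneg) (fun x => ?_) ha
  rw [Real.dist_eq, dist_eq_norm]
  simpa using coord_le_norm (a x - A) i

lemma tendsto_tp {α : Type*} {l : Filter α} {a b c : α → EuclideanSpace ℝ (Fin 3)}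
    {A B C : EuclideanSpace ℝ (Fin 3)} (ha : Tendsto a l (nhds A)) (hb : Tendsto b l (nhds B))
    (hc : Tendsto c l (nhds C)) :
    Tendsto (fun x => tripleProduct (a x) (b x) (c x)) l (nhds (tripleProduct A B C)) := by
  simp only [tp_eq]
  have a0 := tendsto_coord ha 0; have a1 := tendsto_coord ha 1; have a2 := tendsto_coord ha 2
  have b0 := tendsto_coord hb 0; have b1 := tendsto_coord hb 1; have b2 := tendsto_coord hb 2
  have c0 := tendsto_coord hc 0; have c1 := tendsto_coord hc 1; have c2 := tendsto_coord hc 2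
  exact ((((((a0.mul b1).mul c2).sub ((a0.mul b2).mul c1)).sub ((a1.mul b0).mul c2)).add
    ((a1.mul b2).mul c0)).add ((a2.mul b0).mul c1)).sub ((a2.mul b1).mul c0)

lemma continuous_tp_comp {f g : ℝ → EuclideanSpace ℝ (Fin 3)}
    (hf : ContDiff ℝ 1 f) (hg : ContDiff ℝ 1 g) :
    Continuous fun p : ℝ × ℝ => tripleProduct (deriv f p.1) (deriv g p.2) (f p.1 - g p.2) := by
  have c1 : Continuous (deriv f) := hf.continuous_deriv le_rfl
  have c2 : Continuous (deriv g) := hg.continuous_deriv le_rfl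
  have c3 : Continuous f := hf.continuous
  have c4 : Continuous g := hg.continuous
  simp only [tp_eq]
  fun_prop

/-- The Gauss linking number is continuous with respect to C¹-uniform
convergence of the curves: if `γᵢⁿ → γᵢ` and `(γᵢⁿ)' → γᵢ'` uniformly on `[0,1]`, with
images of `γ₁ⁿ` and `γ₂ⁿ` disjoint for each `n` and images of `γ₁` and `γ₂` disjoint,
then `L(γ₁ⁿ, γ₂ⁿ) → L(γ₁, γ₂)`. -/
theorem gaussLinkingNumber_continuous
    (γ₁ γ₂ : ℝ → EuclideanSpace ℝ (Fin 3))
    (Γ₁ Γ₂ : ℕ → ℝ → EuclideanSpace ℝ (Fin 3))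
    (h₁ : ContDiff ℝ 1 γ₁) (h₂ : ContDiff ℝ 1 γ₂)
    (hΓ₁ : ∀ n, ContDiff ℝ 1 (Γ₁ n)) (hΓ₂ : ∀ n, ContDiff ℝ 1 (Γ₂ n))
    (hdisj : ∀ t ∈ Icc (0:ℝ) 1, ∀ s ∈ Icc (0:ℝ) 1, γ₁ t ≠ γ₂ s)
    (hdisjn : ∀ n, ∀ t ∈ Icc (0:ℝ) 1, ∀ s ∈ Icc (0:ℝ) 1, Γ₁ n t ≠ Γ₂ n s)
    (hconv₁ : TendstoUniformlyOn (fun n => Γ₁ n) γ₁ atTop (Icc (0:ℝ) 1))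
    (hconv₂ : TendstoUniformlyOn (fun n => Γ₂ n) γ₂ atTop (Icc (0:ℝ) 1))
    (hconv₁' : TendstoUniformlyOn (fun n => deriv (Γ₁ n)) (deriv γ₁) atTop (Icc (0:ℝ) 1))
    (hconv₂' : TendstoUniformlyOn (fun n => deriv (Γ₂ n)) (deriv γ₂) atTop (Icc (0:ℝ) 1)) :
    Tendsto (fun n => gaussLinkingNumber (Γ₁ n) (Γ₂ n)) atTop
      (nhds (gaussLinkingNumber γ₁ γ₂)) := by
  set K : Set (ℝ × ℝ) := (Icc (0:ℝ) 1) ×ˢ (Icc (0:ℝ) 1) with hKdef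
  have hK : IsCompact K := (isCompact_Icc).prod isCompact_Icc
  have hKne : K.Nonempty := ⟨(0, 0), by simp [hKdef]⟩
  have hKmeas : MeasurableSet K := (measurableSet_Icc).prod measurableSet_Icc
  have hcontg : ContinuousOn (fun p : ℝ × ℝ => ‖γ₁ p.1 - γ₂ p.2‖) K := by
    have c3 : Continuous γ₁ := h₁.continuous
    have c4 : Continuous γ₂ := h₂.continuous
    apply Continuous.continuousOn
    fun_prop
  obtain ⟨ε, hε, hεle⟩ : ∃ ε > 0, ∀ p ∈ K, ε ≤ ‖γ₁ p.1 - γ₂ p.2‖ := by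
    obtain ⟨p₀, hp₀K, hp₀⟩ := hK.exists_isMinOn hKne hcontg
    refine ⟨‖γ₁ p₀.1 - γ₂ p₀.2‖, ?_, fun p hp => hp₀ hp⟩
    exact norm_sub_pos_iff.2 (hdisj _ hp₀K.1 _ hp₀K.2)
  obtain ⟨D, hD⟩ := hK.exists_bound_of_continuousOn hcontg
  obtain ⟨M₁, hM₁⟩ := (isCompact_Icc (a := (0:ℝ)) (b := 1)).exists_bound_of_continuousOn
    (h₁.continuous_deriv le_rfl).continuousOn
  obtain ⟨M₂, hM₂⟩ := (isCompact_Icc (a := (0:ℝ)) (b := 1)).exists_bound_of_continuousOn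
    (h₂.continuous_deriv le_rfl).continuousOn
  have hM₁0 : 0 ≤ M₁ := le_trans (norm_nonneg _) (hM₁ 0 (by simp))
  have hM₂0 : 0 ≤ M₂ := le_trans (norm_nonneg _) (hM₂ 0 (by simp))
  have hD0 : 0 ≤ D := by
    have := hD (0,0) (by simp [hKdef])
    simpa using le_trans (norm_nonneg _) this
  -- eventual estimates
  have hev : ∀ᶠ n in atTop, ∀ p ∈ K,
      ε / 2 ≤ ‖Γ₁ n p.1 - Γ₂ n p.2‖ ∧ ‖Γ₁ n p.1 - Γ₂ n p.2‖ ≤ D + ε ∧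
      ‖deriv (Γ₁ n) p.1‖ ≤ M₁ + 1 ∧ ‖deriv (Γ₂ n) p.2‖ ≤ M₂ + 1 := by
    have e1 := (Metric.tendstoUniformlyOn_iff.1 hconv₁) (ε/4) (by positivity)
    have e2 := (Metric.tendstoUniformlyOn_iff.1 hconv₂) (ε/4) (by positivity)
    have e3 := (Metric.tendstoUniformlyOn_iff.1 hconv₁') 1 one_pos
    have e4 := (Metric.tendstoUniformlyOn_iff.1 hconv₂') 1 one_pos
    filter_upwards [e1, e2, e3, e4] with n f1 f2 f3 f4 p hp
    have hp1 := hp.1; have hp2 := hp.2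
    have d1 : ‖γ₁ p.1 - Γ₁ n p.1‖ < ε/4 := by
      have := f1 p.1 hp1; rwa [dist_eq_norm] at this
    have d2 : ‖γ₂ p.2 - Γ₂ n p.2‖ < ε/4 := by
      have := f2 p.2 hp2; rwa [dist_eq_norm] at this
    have key : ‖(γ₁ p.1 - γ₂ p.2) - (Γ₁ n p.1 - Γ₂ n p.2)‖ < ε/2 := by
      have heq : (γ₁ p.1 - γ₂ p.2) - (Γ₁ n p.1 - Γ₂ n p.2)
          = (γ₁ p.1 - Γ₁ n p.1) - (γ₂ p.2 - Γ₂ n p.2) := by abel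
      rw [heq]
      calc ‖(γ₁ p.1 - Γ₁ n p.1) - (γ₂ p.2 - Γ₂ n p.2)‖
          ≤ ‖γ₁ p.1 - Γ₁ n p.1‖ + ‖γ₂ p.2 - Γ₂ n p.2‖ := norm_sub_le _ _
        _ < ε/4 + ε/4 := add_lt_add d1 d2
        _ = ε/2 := by ring
    have hlow := hεle p hp
    have hDp := hD p hp
    simp only [norm_norm] at hDp
    refine ⟨?_, ?_, ?_, ?_⟩
    · have := norm_sub_norm_le (γ₁ p.1 - γ₂ p.2) (Γ₁ n p.1 - Γ₂ n p.2)
      linarith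
    · have := norm_sub_norm_le (Γ₁ n p.1 - Γ₂ n p.2) (γ₁ p.1 - γ₂ p.2)
      rw [norm_sub_rev] at key
      linarith
    · have h6 := norm_sub_norm_le (deriv (Γ₁ n) p.1) (deriv γ₁ p.1)
      rw [norm_sub_rev] at h6
      have hMp := hM₁ p.1 hp1
      have h5 := f3 p.1 hp1; rw [dist_eq_norm] at h5
      linarith
    · have h6 := norm_sub_norm_le (deriv (Γ₂ n) p.2) (deriv γ₂ p.2)
      rw [norm_sub_rev] at h6
      have hMp := hM₂ p.2 hp2
      have h5 := f4 p.2 hp2; rw [dist_eq_norm] at h5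
      linarith
  -- the uniform constant bound
  obtain ⟨C, hCbd⟩ : ∃ C : ℝ, ∀ᶠ n in atTop, ∀ p ∈ K,
      |tripleProduct (deriv (Γ₁ n) p.1) (deriv (Γ₂ n) p.2) (Γ₁ n p.1 - Γ₂ n p.2) /
        ‖Γ₁ n p.1 - Γ₂ n p.2‖ ^ 3| ≤ C := by
    refine ⟨6 * ((M₁ + 1) * (M₂ + 1) * (D + ε)) / (ε/2)^3, ?_⟩
    filter_upwards [hev] with n hn p hp
    obtain ⟨hlow, hup, hd1, hd2⟩ := hn p hp
    have hden : (ε/2)^3 ≤ ‖Γ₁ n p.1 - Γ₂ n p.2‖ ^ 3 := by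
      gcongr
    have hnum : |tripleProduct (deriv (Γ₁ n) p.1) (deriv (Γ₂ n) p.2) (Γ₁ n p.1 - Γ₂ n p.2)|
        ≤ 6 * ((M₁ + 1) * (M₂ + 1) * (D + ε)) := by
      refine (abs_tp_le _ _ _).trans ?_
      gcongr <;> first
        | positivity
        | exact (norm_nonneg _).trans hd1
        | exact norm_nonneg _
    rw [abs_div, abs_of_nonneg (by positivity : (0:ℝ) ≤ ‖Γ₁ n p.1 - Γ₂ n p.2‖ ^ 3)]
    exact div_le_div₀ (by positivity) hnum (by positivity) hden
  -- convergence of the integrals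
  have hInt : Tendsto (fun n => ∫ p in K,
      tripleProduct (deriv (Γ₁ n) p.1) (deriv (Γ₂ n) p.2) (Γ₁ n p.1 - Γ₂ n p.2) /
        ‖Γ₁ n p.1 - Γ₂ n p.2‖ ^ 3) atTop
      (nhds (∫ p in K,
        tripleProduct (deriv γ₁ p.1) (deriv γ₂ p.2) (γ₁ p.1 - γ₂ p.2) /
          ‖γ₁ p.1 - γ₂ p.2‖ ^ 3)) := by
    apply tendsto_integral_filter_of_dominated_convergence (fun _ => C)
    · apply Eventually.of_forall
      intro n
      apply Measurable.aestronglyMeasurable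
      have hc1 := continuous_tp_comp (hΓ₁ n) (hΓ₂ n)
      have hc2 : Continuous fun p : ℝ × ℝ => ‖Γ₁ n p.1 - Γ₂ n p.2‖ ^ 3 := by
        have c3 : Continuous (Γ₁ n) := (hΓ₁ n).continuous
        have c4 : Continuous (Γ₂ n) := (hΓ₂ n).continuous
        fun_prop
      exact hc1.measurable.div hc2.measurable
    · filter_upwards [hCbd] with n hn
      rw [ae_restrict_iff' hKmeas]
      exact Eventually.of_forall fun p hp => by
        rw [Real.norm_eq_abs]; exact hn p hp
    · rw [integrable_const_iff]
      right
      exact isFiniteMeasure_restrict.mpr hK.measure_lt_top.ne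
    · rw [ae_restrict_iff' hKmeas]
      apply Eventually.of_forall
      intro p hp
      have t1 : Tendsto (fun n => deriv (Γ₁ n) p.1) atTop (nhds (deriv γ₁ p.1)) :=
        hconv₁'.tendsto_at hp.1
      have t2 : Tendsto (fun n => deriv (Γ₂ n) p.2) atTop (nhds (deriv γ₂ p.2)) :=
        hconv₂'.tendsto_at hp.2
      have t3 : Tendsto (fun n => Γ₁ n p.1 - Γ₂ n p.2) atTop (nhds (γ₁ p.1 - γ₂ p.2)) :=
        (hconv₁.tendsto_at hp.1).sub (hconv₂.tendsto_at hp.2)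
      have tnum := tendsto_tp t1 t2 t3
      have tden : Tendsto (fun n => ‖Γ₁ n p.1 - Γ₂ n p.2‖ ^ 3) atTop
          (nhds (‖γ₁ p.1 - γ₂ p.2‖ ^ 3)) := (t3.norm).pow 3
      have hne : ‖γ₁ p.1 - γ₂ p.2‖ ^ 3 ≠ 0 := by
        have hne' : γ₁ p.1 ≠ γ₂ p.2 := hdisj _ hp.1 _ hp.2
        have : (0:ℝ) < ‖γ₁ p.1 - γ₂ p.2‖ := norm_sub_pos_iff.2 hne'
        positivity
      exact tnum.div tden hne
  unfold gaussLinkingNumber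
  exact hInt.const_mul _
end

section
/- Let γ₁, γ₂ : [0,1] → ℝ³ be continuously differentiable closed curves whose images are separated by a plane, i.e. there exist a unit vector u ∈ ℝ³ and a real number c with ⟨γ₁(t), u⟩ < c < ⟨γ₂(s), u⟩ for all t, s ∈ [0,1]. Then L(γ₁, γ₂) = 0; the two chains are algebraically unlinked. -/
open MeasureTheory Set Filter

set_option maxHeartbeats 4000000

local notation "E3" => EuclideanSpace ℝ (Fin 3)
local notation "⟪" x ", " y "⟫" => @inner ℝ _ _ x y

lemma tripleProduct_eq (a b c : E3) :
    tripleProduct a b c =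
      a 0 * b 1 * c 2 - a 0 * b 2 * c 1 - a 1 * b 0 * c 2 + a 1 * b 2 * c 0
        + a 2 * b 0 * c 1 - a 2 * b 1 * c 0 := by
  simp [tripleProduct, Matrix.det_fin_three]

lemma inner3 (x y : E3) : ⟪x, y⟫ = x 0 * y 0 + x 1 * y 1 + x 2 * y 2 := by
  simp [PiLp.inner_apply, RCLike.inner_apply, Fin.sum_univ_three]; ring

lemma normsq3 (x : E3) : ‖x‖ ^ 2 = x 0 ^ 2 + x 1 ^ 2 + x 2 ^ 2 := by
  rw [← real_inner_self_eq_norm_sq, inner3]; ring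

lemma hasDerivAt_coord {f : ℝ → E3} {v : E3} {x : ℝ} (hf : HasDerivAt f v x) (i : Fin 3) :
    HasDerivAt (fun t => f t i) (v i) x := by
  exact (EuclideanSpace.proj (𝕜 := ℝ) i).hasFDerivAt.comp_hasDerivAt x hf

/-- Derivative expression for `(fun r => tripleProduct u r w / (‖r‖*(‖r‖ - ⟪u,r⟫)))` along `v`. -/
noncomputable def dExpr (u w r v : E3) : ℝ :=
  (tripleProduct u v w * (‖r‖ * (‖r‖ - ⟪u, r⟫)) -
      tripleProduct u r w *
        (⟪r, v⟫ / ‖r‖ * (‖r‖ - ⟪u, r⟫) + ‖r‖ * (⟪r, v⟫ / ‖r‖ - ⟪u, v⟫))) /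
    (‖r‖ * (‖r‖ - ⟪u, r⟫)) ^ 2

lemma hasDerivAt_norm_comp {f : ℝ → E3} {v : E3} {x : ℝ} (hf : HasDerivAt f v x)
    (h0 : f x ≠ 0) : HasDerivAt (fun y => ‖f y‖) (⟪f x, v⟫ / ‖f x‖) x := by
  have hq : HasDerivAt (fun y => ⟪f y, f y⟫) (⟪f x, v⟫ + ⟪v, f x⟫) x := hf.inner ℝ hf
  have hqx : ⟪f x, f x⟫ ≠ 0 := fun h => h0 (inner_self_eq_zero.mp h)
  have hfx : ‖f x‖ ≠ 0 := norm_ne_zero_iff.mpr h0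
  have hnorm : ∀ z : E3, Real.sqrt ⟪z, z⟫ = ‖z‖ := by
    intro z
    rw [real_inner_self_eq_norm_sq, Real.sqrt_sq (norm_nonneg z)]
  have hs : HasDerivAt (fun y => Real.sqrt ⟪f y, f y⟫)
      (1 / (2 * Real.sqrt ⟪f x, f x⟫) * (⟪f x, v⟫ + ⟪v, f x⟫)) x :=
    (Real.hasDerivAt_sqrt hqx).comp x hq
  simp only [hnorm] at hs
  convert hs using 1
  rw [real_inner_comm v (f x)]
  field_simp
  ring

lemma hasDerivAt_triple {f : ℝ → E3} {v : E3} {x : ℝ} (hf : HasDerivAt f v x) (u w : E3) :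
    HasDerivAt (fun y => tripleProduct u (f y) w) (tripleProduct u v w) x := by
  simp only [tripleProduct_eq]
  have h1 := ((hasDerivAt_coord hf 1).const_mul (u 0)).mul_const (w 2)
  have h2 := ((hasDerivAt_coord hf 2).const_mul (u 0)).mul_const (w 1)
  have h3 := ((hasDerivAt_coord hf 0).const_mul (u 1)).mul_const (w 2)
  have h4 := ((hasDerivAt_coord hf 2).const_mul (u 1)).mul_const (w 0)
  have h5 := ((hasDerivAt_coord hf 0).const_mul (u 2)).mul_const (w 1)
  have h6 := ((hasDerivAt_coord hf 1).const_mul (u 2)).mul_const (w 0)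
  exact ((((h1.sub h2).sub h3).add h4).add h5).sub h6

lemma hasDerivAt_Phi (u w : E3) {f : ℝ → E3} {v : E3} {x : ℝ} (hf : HasDerivAt f v x)
    (h0 : f x ≠ 0) (hD : ‖f x‖ - ⟪u, f x⟫ ≠ 0) :
    HasDerivAt (fun y => tripleProduct u (f y) w / (‖f y‖ * (‖f y‖ - ⟪u, f y⟫)))
      (dExpr u w (f x) v) x := by
  have hfx : ‖f x‖ ≠ 0 := norm_ne_zero_iff.mpr h0
  have hnorm := hasDerivAt_norm_comp hf h0
  have hiu : HasDerivAt (fun y => ⟪u, f y⟫) ⟪u, v⟫ x := by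
    simpa using (hasDerivAt_const x u).inner ℝ hf
  have hden : HasDerivAt (fun y => ‖f y‖ * (‖f y‖ - ⟪u, f y⟫))
      (⟪f x, v⟫ / ‖f x‖ * (‖f x‖ - ⟪u, f x⟫) + ‖f x‖ * (⟪f x, v⟫ / ‖f x‖ - ⟪u, v⟫)) x :=
    hnorm.mul (hnorm.sub hiu)
  have hnum := hasDerivAt_triple hf u w
  have hdne : ‖f x‖ * (‖f x‖ - ⟪u, f x⟫) ≠ 0 := mul_ne_zero hfx hD
  exact hnum.div hden hdne

set_option maxRecDepth 100000 in
lemma curl (u a b r : E3) (hu : ‖u‖ = 1) (h0 : r ≠ 0) (hur : ⟪u, r⟫ < 0) :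
    -dExpr u a r (-b) - dExpr u b r a = tripleProduct a b r / ‖r‖ ^ 3 := by
  have hp0 : (0:ℝ) < ‖r‖ := norm_pos_iff.mpr h0
  have hpne : ‖r‖ ≠ 0 := hp0.ne'
  have hp2 : ‖r‖ ^ 2 = r 0 ^ 2 + r 1 ^ 2 + r 2 ^ 2 := normsq3 r
  have hu2 : u 0 ^ 2 + u 1 ^ 2 + u 2 ^ 2 = 1 := by
    have := normsq3 u; rw [hu] at this; linarith
  have hD : ‖r‖ - (u 0 * r 0 + u 1 * r 1 + u 2 * r 2) ≠ 0 := by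
    have := inner3 u r; nlinarith [hur, hp0]
  have hD' : ‖r‖ - ⟪u, r⟫ ≠ 0 := by rw [inner3]; exact hD
  have key : -dExpr u a r (-b) - dExpr u b r a =
      (-2 * tripleProduct u a b * ‖r‖ ^ 2 * (‖r‖ - ⟪u, r⟫) - tripleProduct u r a * (⟪r, b⟫ * ((‖r‖ - ⟪u, r⟫) + ‖r‖) - ‖r‖ ^ 2 * ⟪u, b⟫) + tripleProduct u r b * (⟪r, a⟫ * ((‖r‖ - ⟪u, r⟫) + ‖r‖) - ‖r‖ ^ 2 * ⟪u, a⟫)) / (‖r‖ ^ 3 * (‖r‖ - ⟪u, r⟫) ^ 2) := by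
    simp only [dExpr, tripleProduct_eq, inner3, PiLp.neg_apply]
    field_simp
    ring
  rw [key, div_eq_div_iff (mul_ne_zero (pow_ne_zero 3 hpne) (pow_ne_zero 2 hD')) (pow_ne_zero 3 hpne)]
  simp only [tripleProduct_eq, inner3]
  linear_combination (‖r‖ ^ 3 * ((-2 : ℝ) * ‖r‖ * u 0 * a 1 * b 2 + (2 : ℝ) * r 0 * u 0 ^ 2 * a 1 * b 2 + (1 : ℝ) * r 1 * u 0 * u 1 * a 1 * b 2 + (1 : ℝ) * r 2 * u 0 * u 2 * a 1 * b 2 + (2 : ℝ) * ‖r‖ * u 0 * a 2 * b 1 + (-2 : ℝ) * r 0 * u 0 ^ 2 * a 2 * b 1 + (-1 : ℝ) * r 1 * u 0 * u 1 * a 2 * b 1 + (-1 : ℝ) * r 2 * u 0 * u 2 * a 2 * b 1 + (2 : ℝ) * ‖r‖ * u 1 * a 0 * b 2 + (-1 : ℝ) * r 0 * u 0 * u 1 * a 0 * b 2 + (-2 : ℝ) * r 1 * u 1 ^ 2 * a 0 * b 2 + (-1 : ℝ) * r 2 * u 1 * u 2 * a 0 * b 2 + (-2 : ℝ) * ‖r‖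 * u 1 * a 2 * b 0 + (1 : ℝ) * r 0 * u 0 * u 1 * a 2 * b 0 + (2 : ℝ) * r 1 * u 1 ^ 2 * a 2 * b 0 + (1 : ℝ) * r 2 * u 1 * u 2 * a 2 * b 0 + (-2 : ℝ) * ‖r‖ * u 2 * a 0 * b 1 + (1 : ℝ) * r 0 * u 0 * u 2 * a 0 * b 1 + (1 : ℝ) * r 1 * u 1 * u 2 * a 0 * b 1 + (2 : ℝ) * r 2 * u 2 ^ 2 * a 0 * b 1 + (2 : ℝ) * ‖r‖ * u 2 * a 1 * b 0 + (-1 : ℝ) * r 0 * u 0 * u 2 * a 1 * b 0 + (-1 : ℝ) * r 1 * u 1 * u 2 * a 1 * b 0 + (-2 : ℝ) * r 2 * u 2 ^ 2 * a 1 * b 0 + (1 : ℝ) * r 1 * u 0 ^ 2 * a 2 * b 0 + (-1 : ℝ) * r 2 * u 0 ^ 2 * a 1 * b 0 + (-1 : ℝ) * r 0 * u 1 ^ 2 * a 2 * b 1 + (1 : ℝ) * r 2 * u 1 ^ 2 * a 0 * b 1 + (1 : ℝ) * r 0 * u 2 ^ 2 * a 1 * b 2 + (-1 : ℝ) * r 1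 * u 2 ^ 2 * a 0 * b 2 + (-1 : ℝ) * r 1 * u 0 ^ 2 * a 0 * b 2 + (1 : ℝ) * r 2 * u 0 ^ 2 * a 0 * b 1 + (1 : ℝ) * r 0 * u 1 ^ 2 * a 1 * b 2 + (-1 : ℝ) * r 2 * u 1 ^ 2 * a 1 * b 0 + (-1 : ℝ) * r 0 * u 2 ^ 2 * a 2 * b 1 + (1 : ℝ) * r 1 * u 2 ^ 2 * a 2 * b 0 + (-1 : ℝ) * r 2 * a 0 * b 1 + (1 : ℝ) * r 1 * a 0 * b 2 + (1 : ℝ) * r 2 * a 1 * b 0 + (-1 : ℝ) * r 0 * a 1 * b 2 + (-1 : ℝ) * r 1 * a 2 * b 0 + (1 : ℝ) * r 0 * a 2 * b 1)) * hp2 + (‖r‖ ^ 3 * ((-1 : ℝ) * r 0 * r 1 ^ 2 * a 2 * b 1 + (1 : ℝ) * r 0 * r 2 ^ 2 * a 1 * b 2 + (1 : ℝ) * r 0 * r 1 ^ 2 * a 1 * b 2 + (-1 : ℝ) * r 0 * r 2 ^ 2 * a 2 * b 1 + (1 : ℝ) * r 0 ^ 3 * a 1 * b 2 + (-1 : ℝ)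 * r 0 ^ 3 * a 2 * b 1 + (1 : ℝ) * r 0 ^ 2 * r 1 * a 2 * b 0 + (1 : ℝ) * r 1 ^ 3 * a 2 * b 0 + (1 : ℝ) * r 1 * r 2 ^ 2 * a 2 * b 0 + (-1 : ℝ) * r 0 ^ 2 * r 2 * a 1 * b 0 + (-1 : ℝ) * r 1 ^ 2 * r 2 * a 1 * b 0 + (-1 : ℝ) * r 2 ^ 3 * a 1 * b 0 + (-1 : ℝ) * r 0 ^ 2 * r 1 * a 0 * b 2 + (-1 : ℝ) * r 1 ^ 3 * a 0 * b 2 + (-1 : ℝ) * r 1 * r 2 ^ 2 * a 0 * b 2 + (1 : ℝ) * r 0 ^ 2 * r 2 * a 0 * b 1 + (1 : ℝ) * r 1 ^ 2 * r 2 * a 0 * b 1 + (1 : ℝ) * r 2 ^ 3 * a 0 * b 1)) * hu2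

lemma continuousOn_coord {α} [TopologicalSpace α] {f : α → E3} {s : Set α}
    (hf : ContinuousOn f s) (i : Fin 3) : ContinuousOn (fun x => f x i) s :=
  (EuclideanSpace.proj (𝕜 := ℝ) (i := i)).continuous.comp_continuousOn hf

lemma continuousOn_triple {α} [TopologicalSpace α] {f g h : α → E3} {s : Set α}
    (hf : ContinuousOn f s) (hg : ContinuousOn g s) (hh : ContinuousOn h s) :
    ContinuousOn (fun x => tripleProduct (f x) (g x) (h x)) s := by
  simp only [tripleProduct_eq]
  have c0 := continuousOn_coord hf 0
  have c1 := continuousOn_coord hf 1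
  have c2 := continuousOn_coord hf 2
  have d0 := continuousOn_coord hg 0
  have d1 := continuousOn_coord hg 1
  have d2 := continuousOn_coord hg 2
  have e0 := continuousOn_coord hh 0
  have e1 := continuousOn_coord hh 1
  have e2 := continuousOn_coord hh 2
  exact ((((((c0.mul d1).mul e2).sub ((c0.mul d2).mul e1)).sub
    ((c1.mul d0).mul e2)).add ((c1.mul d2).mul e0)).add
    ((c2.mul d0).mul e1)).sub ((c2.mul d1).mul e0)

lemma continuousOn_dExpr {α} [TopologicalSpace α] (u : E3) {w r v : α → E3} {s : Set α}
    (hw : ContinuousOn w s) (hr : ContinuousOn r s) (hv : ContinuousOn v s)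
    (h0 : ∀ x ∈ s, r x ≠ 0) (hD : ∀ x ∈ s, ‖r x‖ - ⟪u, r x⟫ ≠ 0) :
    ContinuousOn (fun x => dExpr u (w x) (r x) (v x)) s := by
  have hn : ContinuousOn (fun x => ‖r x‖) s := hr.norm
  have hnne : ∀ x ∈ s, ‖r x‖ ≠ 0 := fun x hx => norm_ne_zero_iff.mpr (h0 x hx)
  have hiur : ContinuousOn (fun x => ⟪u, r x⟫) s := ContinuousOn.inner continuousOn_const hr
  have hiuv : ContinuousOn (fun x => ⟪u, v x⟫) s := ContinuousOn.inner continuousOn_const hv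
  have hirv : ContinuousOn (fun x => ⟪r x, v x⟫) s := ContinuousOn.inner hr hv
  have ht1 : ContinuousOn (fun x => tripleProduct u (v x) (w x)) s :=
    continuousOn_triple continuousOn_const hv hw
  have ht2 : ContinuousOn (fun x => tripleProduct u (r x) (w x)) s :=
    continuousOn_triple continuousOn_const hr hw
  have hden : ContinuousOn (fun x => ‖r x‖ * (‖r x‖ - ⟪u, r x⟫)) s := hn.mul (hn.sub hiur)
  have hq : ContinuousOn (fun x => ⟪r x, v x⟫ / ‖r x‖) s := hirv.div hn hnne
  simp only [dExpr]
  exact ((ht1.mul hden).sub (ht2.mul ((hq.mul (hn.sub hiur)).add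
    (hn.mul (hq.sub hiuv))))).div (hden.pow 2)
    (fun x hx => pow_ne_zero _ (mul_ne_zero (hnne x hx) (hD x hx)))

/-- FTC + Fubini: a continuous function on the unit square which, for each `t`, is the
`s`-derivative of a function with equal values at `s = 0` and `s = 1`, integrates to zero. -/
lemma integral_zero_of_antideriv {g A : ℝ → ℝ → ℝ}
    (hcont : ContinuousOn (fun p : ℝ × ℝ => g p.1 p.2) (Icc 0 1 ×ˢ Icc 0 1))
    (hderiv : ∀ t ∈ Icc (0:ℝ) 1, ∀ s ∈ Icc (0:ℝ) 1, HasDerivAt (fun s' => A t s') (g t s) s)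
    (hper : ∀ t ∈ Icc (0:ℝ) 1, A t 0 = A t 1) :
    ∫ p in (Icc (0:ℝ) 1 ×ˢ Icc (0:ℝ) 1), g p.1 p.2 = 0 := by
  rw [show (volume : Measure (ℝ × ℝ)) = (volume : Measure ℝ).prod volume from
    MeasureTheory.Measure.volume_eq_prod ℝ ℝ]
  have hint : IntegrableOn (fun p : ℝ × ℝ => g p.1 p.2) (Icc 0 1 ×ˢ Icc 0 1)
      ((volume : Measure ℝ).prod volume) := by
    rw [← MeasureTheory.Measure.volume_eq_prod]
    exact hcont.integrableOn_compact (isCompact_Icc.prod isCompact_Icc)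
  rw [MeasureTheory.setIntegral_prod _ hint]
  have : ∀ t ∈ Icc (0:ℝ) 1, (∫ s in Icc (0:ℝ) 1, g t s) = 0 := by
    intro t ht
    have hslice : ContinuousOn (g t) (Icc (0:ℝ) 1) := by
      have := hcont.comp ((Continuous.prodMk_right t).continuousOn (s := Icc (0:ℝ) 1))
        (fun s hs => Set.mk_mem_prod ht hs)
      exact this
    have hii : IntervalIntegrable (g t) volume 0 1 := by
      apply ContinuousOn.intervalIntegrable
      rwa [uIcc_of_le zero_le_one]
    have := intervalIntegral.integral_eq_sub_of_hasDerivAt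
      (f := fun s' => A t s') (f' := g t)
      (fun s hs => hderiv t ht s (by rwa [uIcc_of_le zero_le_one] at hs)) hii
    rw [integral_Icc_eq_integral_Ioc, ← intervalIntegral.integral_of_le zero_le_one, this]
    show A t 1 - A t 0 = 0
    rw [hper t ht, sub_self]
  calc ∫ t in Icc (0:ℝ) 1, ∫ s in Icc (0:ℝ) 1, g t s
      = ∫ t in Icc (0:ℝ) 1, (0:ℝ) := setIntegral_congr_fun measurableSet_Icc this
    _ = 0 := by simp

lemma setIntegral_square_swap (f : ℝ × ℝ → ℝ) :
    ∫ p in (Icc (0:ℝ) 1 ×ˢ Icc (0:ℝ) 1), f (p.2, p.1) =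
      ∫ p in (Icc (0:ℝ) 1 ×ˢ Icc (0:ℝ) 1), f p := by
  rw [show (volume : Measure (ℝ × ℝ)) = (volume : Measure ℝ).prod volume from
    MeasureTheory.Measure.volume_eq_prod ℝ ℝ]
  rw [← Measure.prod_restrict]
  exact MeasureTheory.integral_prod_swap f

/-- Two C¹ closed curves whose images are separated by a plane have Gauss
linking number zero; they are algebraically unlinked. -/
theorem gaussLinkingNumber_separated_by_plane
    (γ₁ γ₂ : ℝ → EuclideanSpace ℝ (Fin 3))
    (h₁ : ContDiff ℝ 1 γ₁) (h₂ : ContDiff ℝ 1 γ₂)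
    (hc₁ : γ₁ 0 = γ₁ 1) (hc₁' : deriv γ₁ 0 = deriv γ₁ 1)
    (hc₂ : γ₂ 0 = γ₂ 1) (hc₂' : deriv γ₂ 0 = deriv γ₂ 1)
    (u : EuclideanSpace ℝ (Fin 3)) (hu : ‖u‖ = 1) (c : ℝ)
    (hsep : ∀ t ∈ Icc (0:ℝ) 1, ∀ s ∈ Icc (0:ℝ) 1,
      inner ℝ (γ₁ t) u < c ∧ c < (inner ℝ (γ₂ s) u : ℝ)) :
    gaussLinkingNumber γ₁ γ₂ = 0 := by
  have hd₁ : ∀ t, HasDerivAt γ₁ (deriv γ₁ t) t :=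
    fun t => (h₁.differentiable one_ne_zero t).hasDerivAt
  have hd₂ : ∀ s, HasDerivAt γ₂ (deriv γ₂ s) s :=
    fun s => (h₂.differentiable one_ne_zero s).hasDerivAt
  -- separation facts
  have hlt : ∀ t ∈ Icc (0:ℝ) 1, ∀ s ∈ Icc (0:ℝ) 1, ⟪u, γ₁ t - γ₂ s⟫ < 0 := by
    intro t ht s hs
    have h1 := (hsep t ht s hs).1
    have h2 := (hsep t ht s hs).2
    have : ⟪u, γ₁ t - γ₂ s⟫ = ⟪γ₁ t, u⟫ - ⟪γ₂ s, u⟫ := by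
      rw [real_inner_comm, inner_sub_left]
    rw [this]
    linarith
  have hr0 : ∀ t ∈ Icc (0:ℝ) 1, ∀ s ∈ Icc (0:ℝ) 1, γ₁ t - γ₂ s ≠ 0 := by
    intro t ht s hs h
    have := hlt t ht s hs
    rw [h, inner_zero_right] at this
    exact lt_irrefl _ this
  have hD : ∀ t ∈ Icc (0:ℝ) 1, ∀ s ∈ Icc (0:ℝ) 1,
      ‖γ₁ t - γ₂ s‖ - ⟪u, γ₁ t - γ₂ s⟫ ≠ 0 := by
    intro t ht s hs
    have h1 := hlt t ht s hs
    have h2 : (0:ℝ) < ‖γ₁ t - γ₂ s‖ := norm_pos_iff.mpr (hr0 t ht s hs)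
    intro h
    nlinarith
  -- continuity basics
  have hcγ₁ : Continuous γ₁ := h₁.continuous
  have hcγ₂ : Continuous γ₂ := h₂.continuous
  have hcd₁ : Continuous (deriv γ₁) := h₁.continuous_deriv le_rfl
  have hcd₂ : Continuous (deriv γ₂) := h₂.continuous_deriv le_rfl
  have hS : MeasurableSet ((Icc (0:ℝ) 1) ×ˢ (Icc (0:ℝ) 1)) :=
    measurableSet_Icc.prod measurableSet_Icc
  have hrcont : Continuous (fun p : ℝ × ℝ => γ₁ p.1 - γ₂ p.2) :=
    (hcγ₁.comp continuous_fst).sub (hcγ₂.comp continuous_snd)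
  have hr0S : ∀ p ∈ (Icc (0:ℝ) 1) ×ˢ (Icc (0:ℝ) 1), γ₁ p.1 - γ₂ p.2 ≠ 0 :=
    fun p hp => hr0 p.1 hp.1 p.2 hp.2
  have hDS : ∀ p ∈ (Icc (0:ℝ) 1) ×ˢ (Icc (0:ℝ) 1),
      ‖γ₁ p.1 - γ₂ p.2‖ - ⟪u, γ₁ p.1 - γ₂ p.2⟫ ≠ 0 :=
    fun p hp => hD p.1 hp.1 p.2 hp.2
  have hgcont : ContinuousOn
      (fun p : ℝ × ℝ => -dExpr u (deriv γ₁ p.1) (γ₁ p.1 - γ₂ p.2) (-(deriv γ₂ p.2)))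
      ((Icc (0:ℝ) 1) ×ˢ (Icc (0:ℝ) 1)) :=
    (continuousOn_dExpr u (hcd₁.comp continuous_fst).continuousOn hrcont.continuousOn
      ((hcd₂.comp continuous_snd).neg).continuousOn hr0S hDS).neg
  have hhcont : ContinuousOn
      (fun p : ℝ × ℝ => dExpr u (deriv γ₂ p.2) (γ₁ p.1 - γ₂ p.2) (deriv γ₁ p.1))
      ((Icc (0:ℝ) 1) ×ˢ (Icc (0:ℝ) 1)) :=
    continuousOn_dExpr u (hcd₂.comp continuous_snd).continuousOn hrcont.continuousOn
      (hcd₁.comp continuous_fst).continuousOn hr0S hDS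
  unfold gaussLinkingNumber
  apply mul_eq_zero_of_right
  have hIeq : EqOn
      (fun p : ℝ × ℝ => tripleProduct (deriv γ₁ p.1) (deriv γ₂ p.2) (γ₁ p.1 - γ₂ p.2) /
        ‖γ₁ p.1 - γ₂ p.2‖ ^ 3)
      (fun p : ℝ × ℝ =>
        (-dExpr u (deriv γ₁ p.1) (γ₁ p.1 - γ₂ p.2) (-(deriv γ₂ p.2))) -
          dExpr u (deriv γ₂ p.2) (γ₁ p.1 - γ₂ p.2) (deriv γ₁ p.1))
      ((Icc (0:ℝ) 1) ×ˢ (Icc (0:ℝ) 1)) :=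
    fun p hp =>
      (curl u (deriv γ₁ p.1) (deriv γ₂ p.2) (γ₁ p.1 - γ₂ p.2) hu (hr0S p hp)
        (hlt p.1 hp.1 p.2 hp.2)).symm
  rw [setIntegral_congr_fun hS hIeq]
  rw [integral_sub
    (hgcont.integrableOn_compact (isCompact_Icc.prod isCompact_Icc))
    (hhcont.integrableOn_compact (isCompact_Icc.prod isCompact_Icc))]
  have hzero1 : ∫ p in (Icc (0:ℝ) 1) ×ˢ (Icc (0:ℝ) 1),
      -dExpr u (deriv γ₁ p.1) (γ₁ p.1 - γ₂ p.2) (-(deriv γ₂ p.2)) = 0 := by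
    apply integral_zero_of_antideriv
      (g := fun t s => -dExpr u (deriv γ₁ t) (γ₁ t - γ₂ s) (-(deriv γ₂ s)))
      (A := fun t s => -(tripleProduct u (γ₁ t - γ₂ s) (deriv γ₁ t) /
        (‖γ₁ t - γ₂ s‖ * (‖γ₁ t - γ₂ s‖ - ⟪u, γ₁ t - γ₂ s⟫))))
    · exact hgcont
    · intro t ht s hs
      exact (hasDerivAt_Phi u (deriv γ₁ t) ((hd₂ s).const_sub (γ₁ t))
        (hr0 t ht s hs) (hD t ht s hs)).neg
    · intro t ht
      simp only [hc₂]
  have hzero2 : ∫ p in (Icc (0:ℝ) 1) ×ˢ (Icc (0:ℝ) 1),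
      dExpr u (deriv γ₂ p.2) (γ₁ p.1 - γ₂ p.2) (deriv γ₁ p.1) = 0 := by
    have hswap := setIntegral_square_swap
      (fun q : ℝ × ℝ => dExpr u (deriv γ₂ q.1) (γ₁ q.2 - γ₂ q.1) (deriv γ₁ q.2))
    rw [show (∫ p in (Icc (0:ℝ) 1) ×ˢ (Icc (0:ℝ) 1),
        dExpr u (deriv γ₂ p.2) (γ₁ p.1 - γ₂ p.2) (deriv γ₁ p.1)) =
      ∫ p in (Icc (0:ℝ) 1) ×ˢ (Icc (0:ℝ) 1),
        (fun q : ℝ × ℝ => dExpr u (deriv γ₂ q.1) (γ₁ q.2 - γ₂ q.1) (deriv γ₁ q.2)) (p.2, p.1)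
      from rfl, hswap]
    apply integral_zero_of_antideriv
      (g := fun s t => dExpr u (deriv γ₂ s) (γ₁ t - γ₂ s) (deriv γ₁ t))
      (A := fun s t => tripleProduct u (γ₁ t - γ₂ s) (deriv γ₂ s) /
        (‖γ₁ t - γ₂ s‖ * (‖γ₁ t - γ₂ s‖ - ⟪u, γ₁ t - γ₂ s⟫)))
    · exact continuousOn_dExpr u (hcd₂.comp continuous_fst).continuousOn
        ((hcγ₁.comp continuous_snd).sub (hcγ₂.comp continuous_fst)).continuousOn
        (hcd₁.comp continuous_snd).continuousOn
        (fun p hp => hr0 p.2 hp.2 p.1 hp.1) (fun p hp => hD p.2 hp.2 p.1 hp.1)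
    · intro s hs t ht
      exact hasDerivAt_Phi u (deriv γ₂ s) ((hd₁ t).sub_const (γ₂ s))
        (hr0 t ht s hs) (hD t ht s hs)
    · intro s hs
      simp only [hc₁]
  rw [hzero1, hzero2, sub_self]
end
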